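/- Let 0 < β < 1, a > 0 and K̄ > 0 be real numbers. Define the one-sided infinite Toeplitz operator 𝒜 on the Banach space ℓ∞ of bounded sequences u = (u₁, u₂, …) by (𝒜u)₁ = Σ_{j≥1} a·β^j·u_j and, for i ≥ 2, (𝒜u)_i = (K̄ + a)·u_{i−1} + Σ_{j≥i} a·β^{j−i+1}·u_j. Then 𝒜 is a well-defined bounded linear operator on ℓ∞, and its spectral radius equals K̄ + a/(1 − β). -/

import Mathlib

open scoped ENNReal NNReal
set_option synthInstance.maxHeartbeats 1000000
set_option maxHeartbeats 4000000

namespace Stmt13Aux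

noncomputable def row (β a : ℝ) (i : ℕ) (u : ℕ → ℝ) : ℝ :=
  ∑' j : ℕ, (if i ≤ j then a * β ^ (j - i + 1) * u j else 0)

noncomputable def Tfun (β a Kb : ℝ) (u : ℕ → ℝ) (i : ℕ) : ℝ :=
  (if i = 0 then 0 else (Kb + a) * u (i - 1)) + row β a i u

variable {β a Kb : ℝ}

lemma summable_row (hβ0 : 0 < β) (hβ1 : β < 1) {u : ℕ → ℝ} {C : ℝ}
    (hu : ∀ j, |u j| ≤ C) (i : ℕ) :
    Summable (fun j : ℕ => if i ≤ j then a * β ^ (j - i + 1) * u j else 0) := by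
  have hgeo : Summable (fun j : ℕ => (|a| * C * β) * β ^ (j - i)) := by
    rw [← summable_nat_add_iff i]
    simp only [Nat.add_sub_cancel]
    exact (summable_geometric_of_lt_one hβ0.le hβ1).mul_left _
  apply Summable.of_norm_bounded hgeo
  intro j
  by_cases h : i ≤ j
  · simp only [h, if_true, Real.norm_eq_abs]
    rw [abs_mul, abs_mul, abs_pow, abs_of_pos hβ0]
    have hb : β ^ (j - i + 1) = β ^ (j - i) * β := by ring
    rw [hb]
    calc |a| * (β ^ (j - i) * β) * |u j| ≤ |a| * (β ^ (j - i) * β) * C := by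
          apply mul_le_mul_of_nonneg_left (hu j); positivity
      _ = |a| * C * β * β ^ (j - i) := by ring
  · simp only [h, if_false, norm_zero]
    have hC : 0 ≤ C := le_trans (abs_nonneg _) (hu 0)
    positivity

lemma summable_row_coeff (hβ0 : 0 < β) (hβ1 : β < 1) (c : ℝ) (i : ℕ) :
    Summable (fun j : ℕ => if i ≤ j then a * β ^ (j - i + 1) * c else 0) :=
  summable_row hβ0 hβ1 (u := fun _ => c) (C := |c|) (fun _ => le_refl _) i

lemma tsum_row_coeff (hβ0 : 0 < β) (hβ1 : β < 1) (i : ℕ) :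
    ∑' j : ℕ, (if i ≤ j then a * β ^ (j - i + 1) else 0) = a * (β / (1 - β)) := by
  have hinj : Function.Injective (fun k : ℕ => i + k) := add_right_injective i
  have hsupp : Function.support (fun j : ℕ => if i ≤ j then a * β ^ (j - i + 1) else 0)
      ⊆ Set.range (fun k : ℕ => i + k) := by
    intro x hx
    simp only [Function.mem_support, ne_eq, ite_eq_right_iff, not_forall] at hx
    obtain ⟨hix, -⟩ := hx
    exact ⟨x - i, by simp only []; omega⟩
  rw [← hinj.tsum_eq hsupp]
  have he : ∀ k : ℕ, (if i ≤ i + k then a * β ^ (i + k - i + 1) else 0) = (a * β) * β ^ k := by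
    intro k
    rw [if_pos (Nat.le_add_right i k)]
    have h2 : i + k - i = k := by omega
    rw [h2]; ring
  rw [tsum_congr he, tsum_mul_left, tsum_geometric_of_lt_one hβ0.le hβ1]
  rw [div_eq_mul_inv]; ring

lemma tsum_row_coeff_mul (hβ0 : 0 < β) (hβ1 : β < 1) (c : ℝ) (i : ℕ) :
    ∑' j : ℕ, (if i ≤ j then a * β ^ (j - i + 1) * c else 0) = a * (β / (1 - β)) * c := by
  have : ∀ j : ℕ, (if i ≤ j then a * β ^ (j - i + 1) * c else 0)
      = (if i ≤ j then a * β ^ (j - i + 1) else 0) * c := by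
    intro j; by_cases h : i ≤ j <;> simp [h]
  rw [tsum_congr this, tsum_mul_right, tsum_row_coeff hβ0 hβ1]

lemma abs_row_le (hβ0 : 0 < β) (hβ1 : β < 1) (ha : 0 < a) {u : ℕ → ℝ} {C : ℝ}
    (hu : ∀ j, |u j| ≤ C) (i : ℕ) :
    |row β a i u| ≤ a * (β / (1 - β)) * C := by
  have hC : 0 ≤ C := le_trans (abs_nonneg _) (hu 0)
  have habs : Summable (fun j : ℕ => ‖if i ≤ j then a * β ^ (j - i + 1) * u j else 0‖) :=
    (summable_row hβ0 hβ1 hu i).abs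
  have h1 : |row β a i u| ≤ ∑' j : ℕ, ‖if i ≤ j then a * β ^ (j - i + 1) * u j else 0‖ :=
    norm_tsum_le_tsum_norm habs
  refine h1.trans ?_
  have h2 : ∀ j : ℕ, ‖if i ≤ j then a * β ^ (j - i + 1) * u j else 0‖
      ≤ (if i ≤ j then a * β ^ (j - i + 1) * C else 0) := by
    intro j
    by_cases h : i ≤ j
    · simp only [h, if_true, Real.norm_eq_abs, abs_mul, abs_mul, abs_pow,
        abs_of_pos hβ0, abs_of_pos ha]
      exact mul_le_mul_of_nonneg_left (hu j) (by positivity)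
    · simp [h]
  calc (∑' j : ℕ, ‖if i ≤ j then a * β ^ (j - i + 1) * u j else 0‖)
      ≤ ∑' j : ℕ, (if i ≤ j then a * β ^ (j - i + 1) * C else 0) :=
        Summable.tsum_le_tsum h2 habs (summable_row_coeff hβ0 hβ1 C i)
    _ = a * (β / (1 - β)) * C := tsum_row_coeff_mul hβ0 hβ1 C i

lemma key_ratio (hβ1 : β < 1) : (Kb + a) + a * (β / (1 - β)) = Kb + a / (1 - β) := by
  have h : (1 : ℝ) - β ≠ 0 := by intro h; nlinarith [h]
  field_simp
  ring

lemma abs_Tfun_le (hβ0 : 0 < β) (hβ1 : β < 1) (ha : 0 < a) (hKb : 0 < Kb)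
    {u : ℕ → ℝ} {C : ℝ} (hu : ∀ j, |u j| ≤ C) (i : ℕ) :
    |Tfun β a Kb u i| ≤ (Kb + a / (1 - β)) * C := by
  have hC : 0 ≤ C := le_trans (abs_nonneg _) (hu 0)
  have h1 : |if i = 0 then (0:ℝ) else (Kb + a) * u (i - 1)| ≤ (Kb + a) * C := by
    by_cases h : i = 0
    · simp [h]; positivity
    · simp only [h, if_false, abs_mul, abs_of_pos (by linarith : (0:ℝ) < Kb + a)]
      exact mul_le_mul_of_nonneg_left (hu _) (by linarith)
  have h2 := abs_row_le hβ0 hβ1 ha hu i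
  calc |Tfun β a Kb u i| ≤ |if i = 0 then (0:ℝ) else (Kb + a) * u (i - 1)| + |row β a i u| :=
        abs_add_le _ _
    _ ≤ (Kb + a) * C + a * (β / (1 - β)) * C := add_le_add h1 h2
    _ = ((Kb + a) + a * (β / (1 - β))) * C := by ring
    _ = (Kb + a / (1 - β)) * C := by rw [key_ratio hβ1]


section Linear

lemma Tfun_add (hβ0 : 0 < β) (hβ1 : β < 1) {u v : ℕ → ℝ} {C D : ℝ}
    (hu : ∀ j, |u j| ≤ C) (hv : ∀ j, |v j| ≤ D) (i : ℕ) :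
    Tfun β a Kb (u + v) i = Tfun β a Kb u i + Tfun β a Kb v i := by
  unfold Tfun row
  have h : ∀ j : ℕ, (if i ≤ j then a * β ^ (j - i + 1) * (u + v) j else 0)
      = (if i ≤ j then a * β ^ (j - i + 1) * u j else 0)
        + (if i ≤ j then a * β ^ (j - i + 1) * v j else 0) := by
    intro j; by_cases h : i ≤ j <;> simp [h, Pi.add_apply] <;> ring
  rw [tsum_congr h, Summable.tsum_add (summable_row hβ0 hβ1 hu i) (summable_row hβ0 hβ1 hv i)]
  by_cases h : i = 0 <;> simp [h, Pi.add_apply] <;> ring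

lemma Tfun_smul (hβ0 : 0 < β) (hβ1 : β < 1) {u : ℕ → ℝ} {C : ℝ}
    (hu : ∀ j, |u j| ≤ C) (c : ℝ) (i : ℕ) :
    Tfun β a Kb (c • u) i = c * Tfun β a Kb u i := by
  unfold Tfun row
  have h : ∀ j : ℕ, (if i ≤ j then a * β ^ (j - i + 1) * (c • u) j else 0)
      = c * (if i ≤ j then a * β ^ (j - i + 1) * u j else 0) := by
    intro j; by_cases h : i ≤ j <;> simp [h, Pi.smul_apply, smul_eq_mul] <;> ring
  rw [tsum_congr h, tsum_mul_left]
  by_cases h : i = 0 <;> simp [h, Pi.smul_apply, smul_eq_mul] <;> ring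

end Linear

section Pos

lemma row_nonneg (hβ0 : 0 < β) (ha : 0 < a) {w : ℕ → ℝ} (hw : ∀ j, 0 ≤ w j) (i : ℕ) :
    0 ≤ row β a i w := by
  apply tsum_nonneg
  intro j
  by_cases h : i ≤ j
  · simp only [h, if_true]
    have := hw j; positivity
  · simp [h]

lemma Tfun_nonneg (hβ0 : 0 < β) (ha : 0 < a) (hKb : 0 < Kb) {w : ℕ → ℝ}
    (hw : ∀ j, 0 ≤ w j) (i : ℕ) : 0 ≤ Tfun β a Kb w i := by
  unfold Tfun
  have h2 := row_nonneg hβ0 ha hw i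
  have h1 : 0 ≤ (if i = 0 then (0:ℝ) else (Kb + a) * w (i - 1)) := by
    by_cases h : i = 0
    · simp [h]
    · simp only [h, if_false]
      have := hw (i-1); positivity
  linarith

/-- the key lower bound on rows `i ≥ 1` -/
lemma Tfun_ge (hβ0 : 0 < β) (hβ1 : β < 1) (ha : 0 < a) (hKb : 0 < Kb)
    {w : ℕ → ℝ} {C m : ℝ} (hwC : ∀ j, |w j| ≤ C) (hm : 0 ≤ m)
    {i : ℕ} (hi : 1 ≤ i) (hw : ∀ j, i - 1 ≤ j → m ≤ w j) :
    (Kb + a / (1 - β)) * m ≤ Tfun β a Kb w i := by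
  unfold Tfun
  rw [if_neg (by omega)]
  have h1 : (Kb + a) * m ≤ (Kb + a) * w (i - 1) :=
    mul_le_mul_of_nonneg_left (hw (i-1) le_rfl) (by linarith)
  have h2 : a * (β / (1 - β)) * m ≤ row β a i w := by
    unfold row
    rw [← tsum_row_coeff_mul hβ0 hβ1 m i]
    apply Summable.tsum_le_tsum _ (summable_row_coeff hβ0 hβ1 m i) (summable_row hβ0 hβ1 hwC i)
    intro j
    by_cases h : i ≤ j
    · simp only [h, if_true]
      exact mul_le_mul_of_nonneg_left (hw j (by omega)) (by positivity)
    · simp [h]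
  have hk := key_ratio (β := β) (a := a) (Kb := Kb) hβ1
  nlinarith [h1, h2]

end Pos

section Op

variable (β a Kb)

/-- pointwise bound helper for lp elements -/
lemma lp_bound (u : lp (fun _ : ℕ => ℝ) ⊤) : ∀ j, |(u : ∀ _ : ℕ, ℝ) j| ≤ ‖u‖ :=
  fun j => lp.norm_apply_le_norm ENNReal.top_ne_zero u j

lemma memℓp_Tfun (hβ0 : 0 < β) (hβ1 : β < 1) (ha : 0 < a) (hKb : 0 < Kb)
    (u : lp (fun _ : ℕ => ℝ) ⊤) : Memℓp (Tfun β a Kb (u : ∀ _ : ℕ, ℝ)) ⊤ := by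
  apply memℓp_infty
  refine ⟨(Kb + a / (1 - β)) * ‖u‖, ?_⟩
  rintro x ⟨i, rfl⟩
  exact abs_Tfun_le hβ0 hβ1 ha hKb (lp_bound u) i

/-- The Toeplitz operator as a continuous linear map. -/
noncomputable def Top (hβ0 : 0 < β) (hβ1 : β < 1) (ha : 0 < a) (hKb : 0 < Kb) :
    lp (fun _ : ℕ => ℝ) ⊤ →L[ℝ] lp (fun _ : ℕ => ℝ) ⊤ :=
  LinearMap.mkContinuous
    { toFun := fun u => ⟨Tfun β a Kb (u : ∀ _ : ℕ, ℝ), memℓp_Tfun β a Kb hβ0 hβ1 ha hKb u⟩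
      map_add' := by
        intro u v
        ext i
        exact Tfun_add hβ0 hβ1 (lp_bound u) (lp_bound v) i
      map_smul' := by
        intro c u
        ext i
        exact Tfun_smul hβ0 hβ1 (lp_bound u) c i }
    (Kb + a / (1 - β))
    (by
      intro u
      apply lp.norm_le_of_forall_le
      · have h1β : 0 < 1 - β := by linarith
        have : 0 ≤ a / (1 - β) := by positivity
        have := norm_nonneg u
        nlinarith
      · intro i
        exact abs_Tfun_le hβ0 hβ1 ha hKb (lp_bound u) i)

variable {β a Kb}

lemma Top_apply (hβ0 : 0 < β) (hβ1 : β < 1) (ha : 0 < a) (hKb : 0 < Kb)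
    (u : lp (fun _ : ℕ => ℝ) ⊤) (i : ℕ) :
    ((Top β a Kb hβ0 hβ1 ha hKb u : lp (fun _ : ℕ => ℝ) ⊤) : ∀ _ : ℕ, ℝ) i
      = Tfun β a Kb (u : ∀ _ : ℕ, ℝ) i := rfl

lemma Top_norm_le (hβ0 : 0 < β) (hβ1 : β < 1) (ha : 0 < a) (hKb : 0 < Kb) :
    ‖Top β a Kb hβ0 hβ1 ha hKb‖ ≤ Kb + a / (1 - β) := by
  apply LinearMap.mkContinuous_norm_le
  have h1β : 0 < 1 - β := by linarith
  positivity

end Op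

section Lower

variable (hβ0 : 0 < β) (hβ1 : β < 1) (ha : 0 < a) (hKb : 0 < Kb)

/-- the constant-one sequence -/
noncomputable def e : lp (fun _ : ℕ => ℝ) ⊤ :=
  ⟨fun _ => (1:ℝ), memℓp_infty ⟨1, by rintro x ⟨i, rfl⟩; simp⟩⟩

lemma e_apply (j : ℕ) : ((e : lp (fun _ : ℕ => ℝ) ⊤) : ∀ _ : ℕ, ℝ) j = 1 := rfl

lemma e_norm_le : ‖(e : lp (fun _ : ℕ => ℝ) ⊤)‖ ≤ 1 :=
  lp.norm_le_of_forall_le zero_le_one (fun i => by simp [e_apply])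

lemma pow_e_bounds (n : ℕ) :
    (∀ j, 0 ≤ (((Top β a Kb hβ0 hβ1 ha hKb) ^ n) e : ∀ _ : ℕ, ℝ) j) ∧
      (∀ j, n ≤ j → (Kb + a / (1 - β)) ^ n ≤ (((Top β a Kb hβ0 hβ1 ha hKb) ^ n) e : ∀ _ : ℕ, ℝ) j) := by
  induction n with
  | zero =>
    refine ⟨fun j => ?_, fun j _ => ?_⟩ <;> simp [e_apply]
  | succ n ih =>
    set T := Top β a Kb hβ0 hβ1 ha hKb with hT
    have hps : T ^ (n + 1) = T * T ^ n := pow_succ' T n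
    have happ : ∀ (v : lp (fun _ : ℕ => ℝ) ⊤), (T ^ (n+1)) v = T ((T ^ n) v) := by
      intro v; rw [hps]; rfl
    set w := (T ^ n) e with hw
    have hcoord : ∀ i, (((T ^ (n+1)) e : lp (fun _ : ℕ => ℝ) ⊤) : ∀ _ : ℕ, ℝ) i
        = Tfun β a Kb (w : ∀ _ : ℕ, ℝ) i := by
      intro i; rw [happ]; exact Top_apply hβ0 hβ1 ha hKb w i
    constructor
    · intro j
      rw [hcoord]
      exact Tfun_nonneg hβ0 ha hKb ih.1 j
    · intro j hj
      rw [hcoord]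
      have h := Tfun_ge hβ0 hβ1 ha hKb (lp_bound w)
        (m := (Kb + a / (1 - β)) ^ n)
        (by
          have h1β : (0:ℝ) < 1 - β := by linarith
          positivity)
        (i := j) (by omega)
        (fun k hk => ih.2 k (by omega))
      calc (Kb + a / (1 - β)) ^ (n+1) = (Kb + a / (1 - β)) * (Kb + a / (1 - β)) ^ n := by ring
        _ ≤ Tfun β a Kb (w : ∀ _ : ℕ, ℝ) j := h

lemma pow_norm_ge (n : ℕ) :
    (Kb + a / (1 - β)) ^ n ≤ ‖(Top β a Kb hβ0 hβ1 ha hKb) ^ n‖ := by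
  set T := Top β a Kb hβ0 hβ1 ha hKb
  have h1 := (pow_e_bounds hβ0 hβ1 ha hKb n).2 n le_rfl
  have h2 : (((T ^ n) e : lp (fun _ : ℕ => ℝ) ⊤) : ∀ _ : ℕ, ℝ) n ≤ ‖(T ^ n) e‖ := by
    refine le_trans (le_abs_self _) ?_
    rw [← Real.norm_eq_abs]
    exact lp.norm_apply_le_norm ENNReal.top_ne_zero _ n
  have h3 : ‖(T ^ n) e‖ ≤ ‖T ^ n‖ * ‖(e : lp (fun _ : ℕ => ℝ) ⊤)‖ :=
    (T ^ n).le_opNorm e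
  have h4 : ‖T ^ n‖ * ‖(e : lp (fun _ : ℕ => ℝ) ⊤)‖ ≤ ‖T ^ n‖ * 1 :=
    mul_le_mul_of_nonneg_left e_norm_le (norm_nonneg _)
  linarith

end Lower

section Resolvent

variable (hβ0 : 0 < β) (hβ1 : β < 1) (ha : 0 < a) (hKb : 0 < Kb)

noncomputable def evalCLM (i : ℕ) : lp (fun _ : ℕ => ℝ) ⊤ →L[ℝ] ℝ :=
  LinearMap.mkContinuous
    { toFun := fun u => (u : ∀ _ : ℕ, ℝ) i
      map_add' := fun u v => rfl
      map_smul' := fun c u => rfl } 1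
    (fun u => by
      rw [one_mul]
      exact lp.norm_apply_le_norm ENNReal.top_ne_zero u i)

lemma resolvent_norm_ge {s : ℝ} (hs : Kb + a / (1 - β) < s) :
    (s - (Kb + a / (1 - β)))⁻¹
      ≤ ‖Ring.inverse (s • (1 : lp (fun _ : ℕ => ℝ) ⊤ →L[ℝ] lp (fun _ : ℕ => ℝ) ⊤)
          - Top β a Kb hβ0 hβ1 ha hKb)‖ := by
  have h1β : (0:ℝ) < 1 - β := by linarith
  set r : ℝ := Kb + a / (1 - β) with hrdef
  set T := Top β a Kb hβ0 hβ1 ha hKb with hT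
  have hr0 : 0 < r := by rw [hrdef]; positivity
  have hs0 : 0 < s := lt_trans hr0 hs
  have hTn : ‖T‖ ≤ r := Top_norm_le hβ0 hβ1 ha hKb
  have hsm : ∀ (c d : ℝ) (X Y : lp (fun _ : ℕ => ℝ) ⊤ →L[ℝ] lp (fun _ : ℕ => ℝ) ⊤),
      (c • X) * (d • Y) = (c * d) • (X * Y) := by
    intro c d X Y
    ext v
    simp only [ContinuousLinearMap.mul_apply, ContinuousLinearMap.smul_apply, map_smul,
      smul_smul, mul_comm d c]
  have hlt : ‖s⁻¹ • T‖ < 1 := by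
    have hb : ‖s⁻¹ • T‖ ≤ s⁻¹ * r := by
      apply ContinuousLinearMap.opNorm_le_bound _ (by positivity)
      intro v
      have h1 : (s⁻¹ • T) v = s⁻¹ • (T v) := rfl
      rw [h1, norm_smul, Real.norm_eq_abs, abs_of_pos (inv_pos.mpr hs0)]
      have := T.le_opNorm v
      have h2 : ‖T‖ * ‖v‖ ≤ r * ‖v‖ := mul_le_mul_of_nonneg_right hTn (norm_nonneg v)
      have h3 : ‖T v‖ ≤ r * ‖v‖ := le_trans this h2
      calc s⁻¹ * ‖T v‖ ≤ s⁻¹ * (r * ‖v‖) := mul_le_mul_of_nonneg_left h3 (by positivity)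
        _ = s⁻¹ * r * ‖v‖ := by ring
    have h2 : s⁻¹ * r < 1 := by
      rw [inv_mul_lt_iff₀ hs0, mul_one]; exact hs
    linarith
  set G := ∑' n : ℕ, (s⁻¹ • T) ^ n with hG
  have hsum : Summable (fun n : ℕ => (s⁻¹ • T) ^ n) := summable_geometric_of_norm_lt_one hlt
  have hfact : s • (1 : lp (fun _ : ℕ => ℝ) ⊤ →L[ℝ] lp (fun _ : ℕ => ℝ) ⊤) - T
      = s • ((1 : lp (fun _ : ℕ => ℝ) ⊤ →L[ℝ] lp (fun _ : ℕ => ℝ) ⊤) - s⁻¹ • T) := by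
    rw [smul_sub, smul_smul, mul_inv_cancel₀ hs0.ne', one_smul]
  have hval_inv : (s • (1 : lp (fun _ : ℕ => ℝ) ⊤ →L[ℝ] lp (fun _ : ℕ => ℝ) ⊤) - T)
      * (s⁻¹ • G) = 1 := by
    rw [hfact, hsm, mul_inv_cancel₀ hs0.ne', one_smul, mul_neg_geom_series _ hlt]
  have hinv_val : (s⁻¹ • G) * (s • (1 : lp (fun _ : ℕ => ℝ) ⊤ →L[ℝ] lp (fun _ : ℕ => ℝ) ⊤) - T)
      = 1 := by
    rw [hfact, hsm, inv_mul_cancel₀ hs0.ne', one_smul, geom_series_mul_neg _ hlt]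
  set U : (lp (fun _ : ℕ => ℝ) ⊤ →L[ℝ] lp (fun _ : ℕ => ℝ) ⊤)ˣ :=
    ⟨s • 1 - T, s⁻¹ • G, hval_inv, hinv_val⟩ with hU
  have hRinv : Ring.inverse (s • (1 : lp (fun _ : ℕ => ℝ) ⊤ →L[ℝ] lp (fun _ : ℕ => ℝ) ⊤) - T)
      = s⁻¹ • G := Ring.inverse_unit U
  rw [hRinv]
  set B := s⁻¹ • G with hB
  have key : ∀ i : ℕ, s⁻¹ * ∑ n ∈ Finset.range (i+1), (s⁻¹ * r) ^ n ≤ ‖B‖ := by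
    intro i
    set Φ : (lp (fun _ : ℕ => ℝ) ⊤ →L[ℝ] lp (fun _ : ℕ => ℝ) ⊤) →L[ℝ] ℝ :=
      (evalCLM i).comp (ContinuousLinearMap.apply ℝ (lp (fun _ : ℕ => ℝ) ⊤) e) with hΦ
    have hΦapp : ∀ X : lp (fun _ : ℕ => ℝ) ⊤ →L[ℝ] lp (fun _ : ℕ => ℝ) ⊤,
        Φ X = ((X e : lp (fun _ : ℕ => ℝ) ⊤) : ∀ _ : ℕ, ℝ) i := fun X => rfl
    have hterm : ∀ n : ℕ, Φ ((s⁻¹ • T) ^ n)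
        = s⁻¹ ^ n * (((T ^ n) e : lp (fun _ : ℕ => ℝ) ⊤) : ∀ _ : ℕ, ℝ) i := by
      intro n
      have h1 : (s⁻¹ • T) ^ n = s⁻¹ ^ n • T ^ n := by
        induction n with
        | zero => simp
        | succ m ihm =>
          rw [pow_succ, ihm, pow_succ, pow_succ]
          have := hsm (s⁻¹ ^ m) s⁻¹ (T ^ m) T
          rw [← this]
      rw [hΦapp, h1]
      rfl
    have htermnn : ∀ n : ℕ, 0 ≤ Φ ((s⁻¹ • T) ^ n) := by
      intro n
      rw [hterm n]
      have := (pow_e_bounds hβ0 hβ1 ha hKb n).1 i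
      positivity
    have hΦsum : Summable (fun n : ℕ => Φ ((s⁻¹ • T) ^ n)) :=
      hsum.map Φ.toLinearMap.toAddMonoidHom Φ.continuous
    have hΦtsum : Φ G = ∑' n : ℕ, Φ ((s⁻¹ • T) ^ n) := ContinuousLinearMap.map_tsum Φ hsum
    have hpartial : ∑ n ∈ Finset.range (i+1), (s⁻¹ * r) ^ n
        ≤ ∑ n ∈ Finset.range (i+1), Φ ((s⁻¹ • T) ^ n) := by
      apply Finset.sum_le_sum
      intro n hn
      rw [hterm n, mul_pow]
      have hni : n ≤ i := by
        have := Finset.mem_range.mp hn; omega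
      have h2 := (pow_e_bounds hβ0 hβ1 ha hKb n).2 i hni
      rw [← hrdef] at h2
      exact mul_le_mul_of_nonneg_left h2 (by positivity)
    have hΦG : ∑ n ∈ Finset.range (i+1), Φ ((s⁻¹ • T) ^ n) ≤ Φ G := by
      rw [hΦtsum]
      exact Summable.sum_le_tsum _ (fun n _ => htermnn n) hΦsum
    have hΦB : Φ B = s⁻¹ * Φ G := by rw [hB, map_smul, smul_eq_mul]
    have hBnorm : Φ B ≤ ‖B‖ := by
      rw [hΦapp]
      have h1 : ((B e : lp (fun _ : ℕ => ℝ) ⊤) : ∀ _ : ℕ, ℝ) i ≤ ‖B e‖ := by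
        refine le_trans (le_abs_self _) ?_
        rw [← Real.norm_eq_abs]
        exact lp.norm_apply_le_norm ENNReal.top_ne_zero _ i
      have h2 : ‖B e‖ ≤ ‖B‖ * ‖(e : lp (fun _ : ℕ => ℝ) ⊤)‖ := B.le_opNorm e
      have h3 : ‖B‖ * ‖(e : lp (fun _ : ℕ => ℝ) ⊤)‖ ≤ ‖B‖ * 1 :=
        mul_le_mul_of_nonneg_left e_norm_le (norm_nonneg _)
      linarith
    calc s⁻¹ * ∑ n ∈ Finset.range (i+1), (s⁻¹ * r) ^ n
        ≤ s⁻¹ * Φ G := by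
          apply mul_le_mul_of_nonneg_left _ (by positivity)
          exact le_trans hpartial hΦG
      _ = Φ B := hΦB.symm
      _ ≤ ‖B‖ := hBnorm
  have hsr : s⁻¹ * r < 1 := by rw [inv_mul_lt_iff₀ hs0, mul_one]; exact hs
  have hgeom : HasSum (fun n : ℕ => (s⁻¹ * r) ^ n) (1 - s⁻¹ * r)⁻¹ :=
    hasSum_geometric_of_lt_one (by positivity) hsr
  have htend : Filter.Tendsto (fun N : ℕ => s⁻¹ * ∑ n ∈ Finset.range N, (s⁻¹ * r) ^ n)
      Filter.atTop (nhds (s⁻¹ * (1 - s⁻¹ * r)⁻¹)) :=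
    hgeom.tendsto_sum_nat.const_mul s⁻¹
  have hlim : s⁻¹ * (1 - s⁻¹ * r)⁻¹ ≤ ‖B‖ := by
    apply le_of_tendsto htend
    apply Filter.Eventually.of_forall
    intro N
    match N with
    | 0 => simp [norm_nonneg]
    | (i+1) => exact key i
  have heq : s⁻¹ * (1 - s⁻¹ * r)⁻¹ = (s - r)⁻¹ := by
    have hsr' : (0:ℝ) < s - r := by linarith
    have h1 : (1:ℝ) - s⁻¹ * r = (s - r) / s := by field_simp
    rw [h1, inv_div]
    rw [eq_comm, inv_eq_iff_eq_inv, eq_comm]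
    field_simp
  linarith [hlim, heq.symm.le]

end Resolvent

section Final

variable (hβ0 : 0 < β) (hβ1 : β < 1) (ha : 0 < a) (hKb : 0 < Kb)

lemma not_unit :
    ¬ IsUnit ((algebraMap ℝ (lp (fun _ : ℕ => ℝ) ⊤ →L[ℝ] lp (fun _ : ℕ => ℝ) ⊤))
        (Kb + a / (1 - β)) - Top β a Kb hβ0 hβ1 ha hKb) := by
  intro h
  have h1β : (0:ℝ) < 1 - β := by linarith
  set r : ℝ := Kb + a / (1 - β) with hrdef
  set T := Top β a Kb hβ0 hβ1 ha hKb with hT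
  rw [Algebra.algebraMap_eq_smul_one] at h
  set g : ℝ → (lp (fun _ : ℕ => ℝ) ⊤ →L[ℝ] lp (fun _ : ℕ => ℝ) ⊤) :=
    fun s => s • (1 : lp (fun _ : ℕ => ℝ) ⊤ →L[ℝ] lp (fun _ : ℕ => ℝ) ⊤) - T with hg
  set f : ℝ → ℝ := fun s => ‖Ring.inverse (g s)‖ with hf
  have hgcont : Continuous g := (continuous_id.smul continuous_const).sub continuous_const
  have hicont : ContinuousAt Ring.inverse (g r) := by
    have h2 := NormedRing.inverse_continuousAt h.unit
    rwa [h.unit_spec] at h2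
  have hfcont : ContinuousAt f r :=
    continuous_norm.continuousAt.comp (hicont.comp hgcont.continuousAt)
  have hev : ∀ᶠ s in nhds r, f s < f r + 1 := hfcont.eventually_lt_const (lt_add_one (f r))
  rw [Metric.eventually_nhds_iff] at hev
  obtain ⟨δ, hδ, hball⟩ := hev
  set M : ℝ := f r + 1 with hM
  have hM0 : 0 < M := by
    have : 0 ≤ f r := norm_nonneg _
    linarith
  set ε : ℝ := min (δ/2) M⁻¹ with hε
  have hε0 : 0 < ε := lt_min (by linarith) (by positivity)
  set s : ℝ := r + ε with hsdef
  have hs : r < s := by rw [hsdef]; linarith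
  have h1 := resolvent_norm_ge hβ0 hβ1 ha hKb (s := s) hs
  have hd : dist s r < δ := by
    rw [Real.dist_eq, hsdef]
    have he : |r + ε - r| = ε := by rw [add_sub_cancel_left, abs_of_pos hε0]
    rw [he]
    have : ε ≤ δ/2 := min_le_left _ _
    linarith
  have h2 : f s < M := hball hd
  have h3 : M ≤ (s - r)⁻¹ := by
    have hsr : s - r = ε := by rw [hsdef]; ring
    rw [hsr]
    have hεM : ε ≤ M⁻¹ := min_le_right _ _
    calc M = (M⁻¹)⁻¹ := (inv_inv M).symm
      _ ≤ ε⁻¹ := by gcongr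
  have h4 : f s = ‖Ring.inverse (s • (1 : lp (fun _ : ℕ => ℝ) ⊤ →L[ℝ] lp (fun _ : ℕ => ℝ) ⊤) - T)‖ := rfl
  rw [h4] at h2
  linarith

lemma spectralRadius_Top :
    spectralRadius ℝ (Top β a Kb hβ0 hβ1 ha hKb) = ENNReal.ofReal (Kb + a / (1 - β)) := by
  have h1β : (0:ℝ) < 1 - β := by linarith
  set r : ℝ := Kb + a / (1 - β) with hrdef
  set T := Top β a Kb hβ0 hβ1 ha hKb with hT
  have hr0 : 0 < r := by rw [hrdef]; positivity
  have hmem : r ∈ spectrum ℝ T := spectrum.mem_iff.mpr (not_unit hβ0 hβ1 ha hKb)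
  haveI : Nontrivial (lp (fun _ : ℕ => ℝ) ⊤) := by
    refine ⟨e, 0, fun h => ?_⟩
    have h0 : ((e : lp (fun _ : ℕ => ℝ) ⊤) : ∀ _ : ℕ, ℝ) 0
        = ((0 : lp (fun _ : ℕ => ℝ) ⊤) : ∀ _ : ℕ, ℝ) 0 := by rw [h]
    rw [e_apply] at h0
    have h00 : ((0 : lp (fun _ : ℕ => ℝ) ⊤) : ∀ _ : ℕ, ℝ) 0 = 0 := rfl
    rw [h00] at h0
    exact one_ne_zero h0
  apply le_antisymm
  · calc spectralRadius ℝ T ≤ (‖T‖₊ : ℝ≥0∞) := spectrum.spectralRadius_le_nnnorm T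
      _ ≤ ENNReal.ofReal r := by
          rw [← ENNReal.ofReal_coe_nnreal, coe_nnnorm]
          exact ENNReal.ofReal_le_ofReal (Top_norm_le hβ0 hβ1 ha hKb)
  · have h1 : (‖r‖₊ : ℝ≥0∞) ≤ spectralRadius ℝ T :=
      le_iSup₂ (f := fun k (_ : k ∈ spectrum ℝ T) => (‖k‖₊ : ℝ≥0∞)) r hmem
    rwa [← ENNReal.ofReal_coe_nnreal, coe_nnnorm, Real.norm_eq_abs, abs_of_pos hr0] at h1

end Final

end Stmt13Aux

/-- The one-sided infinite Toeplitz operator `𝒜` on `ℓ∞` (with `(𝒜u)₁ = Σ_{j≥1} a β^j u_j`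
and `(𝒜u)_i = (K̄ + a) u_{i-1} + Σ_{j≥i} a β^{j-i+1} u_j` for `i ≥ 2`, here written with
0-based indices) is a well-defined bounded linear operator whose spectral radius equals
`K̄ + a / (1 - β)`. -/
theorem stmt13 (β a Kb : ℝ) (hβ0 : 0 < β) (hβ1 : β < 1) (ha : 0 < a) (hKb : 0 < Kb) :
    ∃ 𝒜 : lp (fun _ : ℕ => ℝ) ⊤ →L[ℝ] lp (fun _ : ℕ => ℝ) ⊤,
      (∀ u : lp (fun _ : ℕ => ℝ) ⊤,
        (𝒜 u : ∀ _ : ℕ, ℝ) 0 = ∑' j : ℕ, a * β ^ (j + 1) * (u : ∀ _ : ℕ, ℝ) j ∧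
        ∀ i : ℕ, 1 ≤ i →
          (𝒜 u : ∀ _ : ℕ, ℝ) i
            = (Kb + a) * (u : ∀ _ : ℕ, ℝ) (i - 1)
              + ∑' j : ℕ,
                  (if i ≤ j then a * β ^ (j - i + 1) * (u : ∀ _ : ℕ, ℝ) j else 0)) ∧
      spectralRadius ℝ 𝒜 = ENNReal.ofReal (Kb + a / (1 - β)) := by
  refine ⟨Stmt13Aux.Top β a Kb hβ0 hβ1 ha hKb, fun u => ⟨?_, ?_⟩, ?_⟩
  · rw [Stmt13Aux.Top_apply hβ0 hβ1 ha hKb u 0]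
    unfold Stmt13Aux.Tfun Stmt13Aux.row
    rw [if_pos rfl, zero_add]
    exact tsum_congr (fun j => by simp [Nat.zero_le])
  · intro i hi
    rw [Stmt13Aux.Top_apply hβ0 hβ1 ha hKb u i]
    unfold Stmt13Aux.Tfun Stmt13Aux.row
    rw [if_neg (by omega)]
  · exact Stmt13Aux.spectralRadius_Top hβ0 hβ1 ha hKb
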